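/- In the experts setting with finite action set A and T ≥ 2·ln|A|, there exists an algorithm for the Learner guaranteeing, against any adaptive Adversary, expected internal regret E[R^T_int] ≤ 4·√(2T·ln|A|). -/

import Mathlib

set_option linter.unusedSectionVars false
set_option linter.unreachableTactic false
set_option linter.unusedTactic false
set_option maxHeartbeats 1000000

open scoped BigOperators

noncomputable section

/-- The prefix of a full transcript `a` before round `t`. -/
def transcriptPrefix {A : Type*} {T : ℕ} (a : Fin T → A) (t : Fin T) : Fin t.1 → A :=
  fun s => a ⟨s.1, s.2.trans t.2⟩

/-- The prefix of a history `h` before its `s`-th entry. -/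
def historyPrefix {A : Type*} {m : ℕ} (h : Fin m → A) (s : Fin m) : Fin s.1 → A :=
  fun u => h ⟨u.1, u.2.trans s.2⟩

/-- A learner's algorithm in the experts setting: at round `t` it maps the realized
history of its actions and the past loss vectors to a distribution over actions. -/
def ExpertStrategy (A : Type) (T : ℕ) : Type :=
  ∀ t : Fin T, (Fin t.1 → A) → (Fin t.1 → A → ℝ) → A → ℝ

/-- The per-round play induced by a strategy `σ` against the adaptive Adversary `r`. -/
noncomputable def playOf {A : Type} {T : ℕ} (σ : ExpertStrategy A T)
    (r : ∀ t : Fin T, (Fin t.1 → A) → A → ℝ)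
    (t : Fin T) (h : Fin t.1 → A) : A → ℝ :=
  σ t h (fun s => r ⟨s.1, s.2.trans t.2⟩ (historyPrefix h s))

/-- The probability of a full transcript `a` when the Learner plays the per-round
distributions `x`. -/
noncomputable def transcriptProb {A : Type} [Fintype A] {T : ℕ}
    (x : ∀ t : Fin T, (Fin t.1 → A) → A → ℝ) (a : Fin T → A) : ℝ :=
  ∏ t, x t (transcriptPrefix a t) (a t)

/-! ### Auxiliary development -/

lemma exp_le_quad {x : ℝ} (hx : |x| ≤ 1) : Real.exp x ≤ 1 + x + x ^ 2 := by
  rcases le_or_gt x 0 with h | h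
  · have h1 : 1 - x ≤ Real.exp (-x) := by
      have := Real.add_one_le_exp (-x); linarith
    have hpos : (0:ℝ) < 1 - x := by linarith
    have h2 : Real.exp x * (1 - x) ≤ 1 := by
      calc Real.exp x * (1 - x) ≤ Real.exp x * Real.exp (-x) :=
            mul_le_mul_of_nonneg_left h1 (le_of_lt (Real.exp_pos x))
        _ = 1 := by rw [← Real.exp_add]; simp
    have hx3 : x ^ 3 ≤ 0 := Odd.pow_nonpos (by decide) h
    have h3 : (1:ℝ) ≤ (1 + x + x ^ 2) * (1 - x) := by ring_nf; nlinarith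
    nlinarith
  · have hb := Real.exp_bound hx (n := 3) (by norm_num)
    have hs : ∑ m ∈ Finset.range 3, x ^ m / (m.factorial : ℝ) = 1 + x + x ^ 2 / 2 := by
      norm_num [Finset.sum_range_succ, Nat.factorial]
    rw [hs] at hb
    have h1 : Real.exp x - (1 + x + x ^ 2 / 2) ≤ |x| ^ 3 * (4 / (6 * 3)) := by
      have := abs_le.1 hb
      simpa [Nat.factorial] using this.2
    have hax : |x| = x := abs_of_pos h
    rw [hax] at h1 hx
    have hx3 : x ^ 3 ≤ x ^ 2 := by nlinarith
    nlinarith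

section Stationary
variable {A : Type} [Fintype A] [Nonempty A] [DecidableEq A]

/-- the swap map: send `p.1` to `p.2`, fix everything else. -/
def swapFun (p : A × A) (l : A) : A := if l = p.1 then p.2 else l

lemma sum_swap (x v : A → ℝ) (p : A × A) :
    ∑ l, x l * v (swapFun p l) = (∑ l, x l * v l) + x p.1 * v p.2 - x p.1 * v p.1 := by
  have : ∀ l, x l * v (swapFun p l) = x l * v l + (if l = p.1 then x p.1 * v p.2 - x p.1 * v p.1 else 0) := by
    intro l
    by_cases h : l = p.1 <;> simp [swapFun, h] <;> ring
  rw [Finset.sum_congr rfl (fun l _ => this l), Finset.sum_add_distrib]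
  simp [Finset.sum_ite_eq']
  ring

lemma exists_stationary (q : A × A → ℝ) (hq0 : ∀ p, 0 ≤ q p) (hq1 : ∑ p, q p = 1) :
    ∃ x : A → ℝ, (∀ k, 0 ≤ x k) ∧ (∑ k, x k = 1) ∧
      ∀ v : A → ℝ, ∑ p, q p * (x p.1 * (v p.1 - v p.2)) = 0 := by
  classical
  set Pm : A → A → ℝ := fun l k => ∑ p, q p * (if swapFun p l = k then (1:ℝ) else 0) with hPm
  have hP0 : ∀ l k, 0 ≤ Pm l k := fun l k =>
    Finset.sum_nonneg fun p _ => mul_nonneg (hq0 p) (by positivity)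
  have hProw : ∀ l, ∑ k, Pm l k = 1 := by
    intro l
    rw [Finset.sum_comm]
    calc ∑ p, ∑ k, q p * (if swapFun p l = k then (1:ℝ) else 0)
        = ∑ p : A × A, q p := by
          refine Finset.sum_congr rfl fun p _ => ?_
          rw [← Finset.mul_sum]
          simp [Finset.sum_ite_eq]
      _ = 1 := hq1
  set F : (A → ℝ) →ₗ[ℝ] (A → ℝ) :=
    { toFun := fun x k => ∑ l, x l * Pm l k
      map_add' := by intro x y; funext k; simp [add_mul, Finset.sum_add_distrib]
      map_smul' := by intro c x; funext k; simp [Finset.mul_sum, mul_assoc] } with hF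
  have hFapp : ∀ x k, F x k = ∑ l, x l * Pm l k := fun x k => rfl
  have hsimplex : ∀ x ∈ stdSimplex ℝ A, F x ∈ stdSimplex ℝ A := by
    intro x hx
    constructor
    · intro k
      exact Finset.sum_nonneg fun l _ => mul_nonneg (hx.1 l) (hP0 l k)
    · rw [show ∑ k, F x k = ∑ k, ∑ l, x l * Pm l k from rfl, Finset.sum_comm]
      calc ∑ l, ∑ k, x l * Pm l k = ∑ l, x l := by
            refine Finset.sum_congr rfl fun l _ => ?_
            rw [← Finset.mul_sum, hProw, mul_one]
        _ = 1 := hx.2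
  have hkey : ∀ (x v : A → ℝ), ∑ k, F x k * v k = ∑ p, q p * (∑ l, x l * v (swapFun p l)) := by
    intro x v
    calc ∑ k, F x k * v k = ∑ k, ∑ l, x l * Pm l k * v k := by
          refine Finset.sum_congr rfl fun k _ => ?_
          rw [hFapp, Finset.sum_mul]
      _ = ∑ l, ∑ k, x l * Pm l k * v k := Finset.sum_comm
      _ = ∑ l, ∑ p, q p * (x l * v (swapFun p l)) := by
          refine Finset.sum_congr rfl fun l _ => ?_
          calc ∑ k, x l * Pm l k * v k
              = ∑ k, ∑ p, q p * (x l * (if swapFun p l = k then (1:ℝ) else 0) * v k) := by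
                refine Finset.sum_congr rfl fun k _ => ?_
                simp only [hPm]
                rw [Finset.mul_sum, Finset.sum_mul]
                refine Finset.sum_congr rfl fun p _ => ?_; ring
            _ = ∑ p, ∑ k, q p * (x l * (if swapFun p l = k then (1:ℝ) else 0) * v k) :=
                Finset.sum_comm
            _ = ∑ p, q p * (x l * v (swapFun p l)) := by
                refine Finset.sum_congr rfl fun p _ => ?_
                rw [← Finset.mul_sum]
                congr 1
                calc (∑ k, x l * (if swapFun p l = k then (1:ℝ) else 0) * v k)
                    = ∑ k, (if swapFun p l = k then x l * v k else 0) :=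
                      Finset.sum_congr rfl fun k _ => by
                        by_cases h : swapFun p l = k <;> simp [h]
                  _ = x l * v (swapFun p l) := by simp [Finset.sum_ite_eq]
      _ = ∑ p, q p * (∑ l, x l * v (swapFun p l)) := by
          rw [Finset.sum_comm]
          exact Finset.sum_congr rfl fun p _ => by rw [Finset.mul_sum]
  -- now find a fixed point of F on the simplex
  set x0 : A → ℝ := fun _ => (Fintype.card A : ℝ)⁻¹ with hx0
  have hx0s : x0 ∈ stdSimplex ℝ A := by
    constructor
    · intro k; positivity
    · simp [hx0, Finset.card_univ]
  set u : ℕ → (A → ℝ) := fun n => (fun y => F y)^[n] x0 with hu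
  have hu0 : u 0 = x0 := rfl
  have husucc : ∀ n, u (n + 1) = F (u n) := fun n =>
    Function.iterate_succ_apply' (fun y => F y) n x0
  have hus : ∀ n, u n ∈ stdSimplex ℝ A := by
    intro n; induction n with
    | zero => exact hx0s
    | succ n ih => rw [husucc]; exact hsimplex _ ih
  set y : ℕ → (A → ℝ) := fun n => ((n:ℝ) + 1)⁻¹ • ∑ m ∈ Finset.range (n + 1), u m with hy
  have hyeq : ∀ n, y n = ∑ m ∈ Finset.range (n+1), ((n:ℝ)+1)⁻¹ • u m := fun n =>
    Finset.smul_sum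
  have hys : ∀ n, y n ∈ stdSimplex ℝ A := by
    intro n
    rw [hyeq]
    exact (convex_stdSimplex ℝ A).sum_mem (fun i _ => by positivity)
      (by simp; rw [mul_inv_cancel₀]; positivity) (fun i _ => hus i)
  have hdiff : ∀ n, F (y n) - y n = ((n:ℝ) + 1)⁻¹ • (u (n + 1) - u 0) := by
    intro n
    have : F (y n) = ((n:ℝ) + 1)⁻¹ • ∑ m ∈ Finset.range (n + 1), u (m + 1) := by
      rw [hy, map_smul, map_sum]
      congr 1
      exact Finset.sum_congr rfl fun m _ => (husucc m).symm
    rw [this, hy, ← smul_sub, ← Finset.sum_sub_distrib, Finset.sum_range_sub u (n+1)]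
  have hnorm1 : ∀ z ∈ stdSimplex ℝ A, ‖z‖ ≤ 1 := by
    intro z hz
    rw [pi_norm_le_iff_of_nonneg zero_le_one]
    intro k
    rw [Real.norm_eq_abs, abs_of_nonneg (hz.1 k)]
    calc z k ≤ ∑ j, z j := Finset.single_le_sum (fun j _ => hz.1 j) (Finset.mem_univ k)
      _ = 1 := hz.2
  have htend0 : Filter.Tendsto (fun n => F (y n) - y n) Filter.atTop (nhds 0) := by
    apply squeeze_zero_norm (a := fun n : ℕ => 2 / ((n:ℝ) + 1))
    · intro n
      rw [hdiff n, norm_smul]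
      have : ‖u (n+1) - u 0‖ ≤ 2 := by
        calc ‖u (n+1) - u 0‖ ≤ ‖u (n+1)‖ + ‖u 0‖ := norm_sub_le _ _
          _ ≤ 2 := by have h1 := hnorm1 _ (hus (n+1)); have h2 := hnorm1 _ (hus 0); linarith
      calc ‖((n:ℝ)+1)⁻¹‖ * ‖u (n+1) - u 0‖ ≤ ((n:ℝ)+1)⁻¹ * 2 := by
            rw [Real.norm_eq_abs, abs_of_pos (by positivity)]
            exact mul_le_mul_of_nonneg_left this (by positivity)
        _ = 2 / ((n:ℝ)+1) := by ring
    · have := tendsto_one_div_add_atTop_nhds_zero_nat.const_mul (2:ℝ)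
      simpa [div_eq_mul_inv, mul_comm] using this
  obtain ⟨x, hxs, φ, hφ, hconv⟩ := (isCompact_stdSimplex ℝ A).tendsto_subseq hys
  have hFcont : Continuous (fun z : A → ℝ => F z) := F.continuous_of_finiteDimensional
  have h1 : Filter.Tendsto (fun n => F (y (φ n)) - y (φ n)) Filter.atTop (nhds (F x - x)) :=
    ((hFcont.tendsto x).comp hconv).sub hconv
  have h2 : Filter.Tendsto (fun n => F (y (φ n)) - y (φ n)) Filter.atTop (nhds 0) :=
    htend0.comp hφ.tendsto_atTop
  have hfix : F x = x := by
    have := tendsto_nhds_unique h1 h2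
    rwa [sub_eq_zero] at this
  refine ⟨x, hxs.1, hxs.2, fun v => ?_⟩
  have h3 : ∑ k, x k * v k = ∑ p, q p * ((∑ l, x l * v l) + x p.1 * v p.2 - x p.1 * v p.1) := by
    conv_lhs => rw [← hfix]
    rw [hkey]
    exact Finset.sum_congr rfl fun p _ => by rw [sum_swap]
  have h4 : ∑ p, q p * ((∑ l, x l * v l) + x p.1 * v p.2 - x p.1 * v p.1)
      = (∑ p, q p) * (∑ l, x l * v l) + ∑ p, q p * (x p.1 * v p.2 - x p.1 * v p.1) := by
    rw [Finset.sum_mul, ← Finset.sum_add_distrib]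
    exact Finset.sum_congr rfl fun p _ => by ring
  rw [h4, hq1, one_mul] at h3
  have h5 : ∑ p, q p * (x p.1 * v p.2 - x p.1 * v p.1) = 0 := by linarith
  rw [← neg_eq_zero, ← Finset.sum_neg_distrib]
  rw [← h5]
  exact Finset.sum_congr rfl fun p _ => by ring

end Stationary

section Algo
variable {A : Type} [Fintype A] [Nonempty A] [DecidableEq A]

/-- a stationary distribution of the swap-matrix of `q`, or uniform if `q` is not a
distribution. -/
noncomputable def fixOf (q : A × A → ℝ) : A → ℝ :=
  if h : (∀ p, 0 ≤ q p) ∧ ∑ p, q p = 1 then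
    (exists_stationary q h.1 h.2).choose
  else fun _ => (Fintype.card A : ℝ)⁻¹

lemma fixOf_nonneg (q : A × A → ℝ) (k : A) : 0 ≤ fixOf q k := by
  unfold fixOf
  split
  · next h => exact (exists_stationary q h.1 h.2).choose_spec.1 k
  · positivity

lemma fixOf_sum (q : A × A → ℝ) : ∑ k, fixOf q k = 1 := by
  unfold fixOf
  split
  · next h => exact (exists_stationary q h.1 h.2).choose_spec.2.1
  · simp [Finset.card_univ]

lemma fixOf_le_one (q : A × A → ℝ) (k : A) : fixOf q k ≤ 1 := by
  calc fixOf q k ≤ ∑ j, fixOf q j :=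
        Finset.single_le_sum (fun j _ => fixOf_nonneg q j) (Finset.mem_univ k)
    _ = 1 := fixOf_sum q

lemma fixOf_zero {q : A × A → ℝ} (hq0 : ∀ p, 0 ≤ q p) (hq1 : ∑ p, q p = 1) (v : A → ℝ) :
    ∑ p, q p * (fixOf q p.1 * (v p.1 - v p.2)) = 0 := by
  unfold fixOf
  rw [dif_pos ⟨hq0, hq1⟩]
  exact (exists_stationary q hq0 hq1).choose_spec.2.2 v

end Algo

section QOf
variable {P : Type*} [Fintype P] [Nonempty P]

/-- normalization of a weight vector. -/
noncomputable def qOf (w : P → ℝ) : P → ℝ := fun p => w p / ∑ p', w p'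

lemma qOf_nonneg {w : P → ℝ} (hw : ∀ p, 0 < w p) (p : P) : 0 ≤ qOf w p :=
  div_nonneg (hw p).le (Finset.sum_nonneg fun p' _ => (hw p').le)

lemma qOf_sum {w : P → ℝ} (hw : ∀ p, 0 < w p) : ∑ p, qOf w p = 1 := by
  have hpos : 0 < ∑ p', w p' := Finset.sum_pos (fun p _ => hw p) Finset.univ_nonempty
  unfold qOf
  rw [← Finset.sum_div]
  exact div_self hpos.ne'

end QOf

/-- the play distribution of the algorithm, as a function of the sequence of past
loss vectors. -/
noncomputable def xd (A : Type) [Fintype A] [Nonempty A] [DecidableEq A] (η : ℝ) :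
    (t : ℕ) → (Fin t → A → ℝ) → A → ℝ
  | t, ℓ => fixOf (qOf (fun p : A × A => Real.exp (η * ∑ s : Fin t,
      xd A η s.1 (fun u => ℓ ⟨u.1, u.2.trans s.2⟩) p.1 * (ℓ s p.1 - ℓ s p.2))))
  termination_by t => t
  decreasing_by exact s.2

lemma xd_eq (A : Type) [Fintype A] [Nonempty A] [DecidableEq A] (η : ℝ) (t : ℕ)
    (ℓ : Fin t → A → ℝ) :
    xd A η t ℓ = fixOf (qOf (fun p : A × A => Real.exp (η * ∑ s : Fin t,
      xd A η s.1 (fun u => ℓ ⟨u.1, u.2.trans s.2⟩) p.1 * (ℓ s p.1 - ℓ s p.2)))) := by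
  rw [xd]

section EW
variable {P : Type*} [Fintype P] [Nonempty P]

lemma ew_bound (η : ℝ) (hη0 : 0 < η) (hη1 : η ≤ 1) (g : ℕ → P → ℝ)
    (hg : ∀ t p, |g t p| ≤ 1) (n : ℕ)
    (hz : ∀ t, t < n → ∑ p, qOf (fun p' => Real.exp (η * ∑ s ∈ Finset.range t, g s p')) p * g t p = 0)
    (p₀ : P) :
    ∑ t ∈ Finset.range n, g t p₀ ≤ Real.log (Fintype.card P) / η + η * n := by
  set Z : ℕ → ℝ := fun m => ∑ p, Real.exp (η * ∑ s ∈ Finset.range m, g s p) with hZ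
  have hZpos : ∀ m, 0 < Z m := fun m =>
    Finset.sum_pos (fun p _ => Real.exp_pos _) Finset.univ_nonempty
  have key : ∀ m, m ≤ n → Real.log (Z m) ≤ Real.log (Fintype.card P) + η ^ 2 * m := by
    intro m
    induction m with
    | zero =>
      intro _
      simp [hZ, Finset.card_univ]
    | succ m ih =>
      intro hm
      have ihm := ih (le_of_lt (Nat.lt_of_succ_le hm))
      set W : P → ℝ := fun p => Real.exp (η * ∑ s ∈ Finset.range m, g s p) with hW
      have hWpos : ∀ p, 0 < W p := fun p => Real.exp_pos _
      have hsplit : Z (m + 1) = ∑ p, W p * Real.exp (η * g m p) := by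
        refine Finset.sum_congr rfl fun p _ => ?_
        rw [hW, Finset.sum_range_succ, mul_add, Real.exp_add]
      have hquad : ∀ p, Real.exp (η * g m p) ≤ 1 + η * g m p + η ^ 2 := by
        intro p
        have habs : |η * g m p| ≤ 1 := by
          rw [abs_mul, abs_of_pos hη0]
          calc η * |g m p| ≤ 1 * 1 :=
            mul_le_mul hη1 (hg m p) (abs_nonneg _) zero_le_one
          _ = 1 := one_mul 1
        calc Real.exp (η * g m p) ≤ 1 + η * g m p + (η * g m p) ^ 2 := exp_le_quad habs
          _ ≤ 1 + η * g m p + η ^ 2 := by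
              have hg2 : g m p ^ 2 ≤ 1 := by
                have := abs_le.1 (hg m p); nlinarith
              have : (η * g m p) ^ 2 ≤ η ^ 2 := by
                rw [mul_pow]; nlinarith [sq_nonneg η]
              linarith
      have h0 := hz m (Nat.lt_of_succ_le hm)
      have hWg : ∑ p, W p * g m p = 0 := by
        have h1 : ∑ p, (W p / Z m) * g m p = 0 := h0
        have h2 : ∑ p, (W p / Z m) * g m p = (∑ p, W p * g m p) / Z m := by
          rw [Finset.sum_div]
          exact Finset.sum_congr rfl fun p _ => div_mul_eq_mul_div _ _ _
        rw [h2, div_eq_zero_iff] at h1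
        rcases h1 with h1 | h1
        · exact h1
        · exact absurd h1 (hZpos m).ne'
      have hle : Z (m + 1) ≤ (1 + η ^ 2) * Z m := by
        rw [hsplit]
        calc ∑ p, W p * Real.exp (η * g m p)
            ≤ ∑ p, W p * (1 + η * g m p + η ^ 2) :=
              Finset.sum_le_sum fun p _ => mul_le_mul_of_nonneg_left (hquad p) (hWpos p).le
          _ = ∑ p, ((1 + η ^ 2) * W p + η * (W p * g m p)) :=
              Finset.sum_congr rfl fun p _ => by ring
          _ = (∑ p, (1 + η ^ 2) * W p) + ∑ p, η * (W p * g m p) :=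
              Finset.sum_add_distrib
          _ = (1 + η ^ 2) * Z m + η * ∑ p, W p * g m p := by
              rw [← Finset.mul_sum, ← Finset.mul_sum]
          _ = (1 + η ^ 2) * Z m := by rw [hWg]; ring
      have hlog : Real.log (Z (m + 1)) ≤ Real.log (1 + η ^ 2) + Real.log (Z m) := by
        calc Real.log (Z (m + 1)) ≤ Real.log ((1 + η ^ 2) * Z m) :=
              Real.log_le_log (hZpos _) hle
          _ = Real.log (1 + η ^ 2) + Real.log (Z m) :=
              Real.log_mul (by positivity) (hZpos m).ne'
      have hlog2 : Real.log (1 + η ^ 2) ≤ η ^ 2 := by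
        have := Real.log_le_sub_one_of_pos (show (0:ℝ) < 1 + η ^ 2 by positivity)
        linarith
      push_cast
      linarith
  have hfin : η * ∑ t ∈ Finset.range n, g t p₀ ≤ Real.log (Fintype.card P) + η ^ 2 * n := by
    have h1 : Real.exp (η * ∑ t ∈ Finset.range n, g t p₀) ≤ Z n :=
      Finset.single_le_sum (f := fun p => Real.exp (η * ∑ t ∈ Finset.range n, g t p))
        (fun p _ => (Real.exp_pos _).le) (Finset.mem_univ p₀)
    calc η * ∑ t ∈ Finset.range n, g t p₀
        = Real.log (Real.exp (η * ∑ t ∈ Finset.range n, g t p₀)) := (Real.log_exp _).symm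
      _ ≤ Real.log (Z n) := Real.log_le_log (Real.exp_pos _) h1
      _ ≤ Real.log (Fintype.card P) + η ^ 2 * n := key n le_rfl
  have h2 : ∑ t ∈ Finset.range n, g t p₀ ≤ (Real.log (Fintype.card P) + η ^ 2 * n) / η := by
    rw [le_div_iff₀ hη0]
    calc (∑ t ∈ Finset.range n, g t p₀) * η = η * ∑ t ∈ Finset.range n, g t p₀ := mul_comm _ _
      _ ≤ _ := hfin
  have h3 : (Real.log (Fintype.card P) + η ^ 2 * n) / η = Real.log (Fintype.card P) / η + η * n := by
    field_simp
  linarith [h2, h3.symm.le, h3.le]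
end EW

section Transcript
variable {A : Type} [Fintype A] [Nonempty A]

lemma prefix_snoc_castSucc {T : ℕ} (a' : Fin T → A) (k : A) (t : Fin T) :
    transcriptPrefix (Fin.snoc a' k) t.castSucc = transcriptPrefix a' t := by
  funext u
  exact Fin.snoc_castSucc (α := fun _ => A) k a' ⟨u.1, u.2.trans t.2⟩

lemma prefix_snoc_last {T : ℕ} (a' : Fin T → A) (k : A) :
    transcriptPrefix (Fin.snoc a' k) (Fin.last T) = a' := by
  funext u
  exact Fin.snoc_castSucc (α := fun _ => A) k a' ⟨u.1, u.2⟩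

lemma transcript_sum_split {T : ℕ} (G : ∀ t : Fin (T+1), (Fin t.1 → A) → A → ℝ) :
    ∑ a : Fin (T+1) → A, ∏ t, G t (transcriptPrefix a t) (a t)
    = ∑ a' : Fin T → A, (∏ t : Fin T,
        (fun (t : Fin T) => G t.castSucc) t (transcriptPrefix a' t) (a' t)) *
        (∑ k, G (Fin.last T) a' k) := by
  rw [← Equiv.sum_comp (Fin.snocEquiv (fun _ => A))
    (fun a => ∏ t, G t (transcriptPrefix a t) (a t)), Fintype.sum_prod_type, Finset.sum_comm]
  refine Finset.sum_congr rfl fun a' _ => ?_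
  rw [Finset.mul_sum]
  refine Finset.sum_congr rfl fun k _ => ?_
  have he : (Fin.snocEquiv (fun _ => A)) (k, a') = Fin.snoc a' k := rfl
  rw [he, Fin.prod_univ_castSucc]
  congr 1
  · refine Finset.prod_congr rfl fun t _ => ?_
    rw [prefix_snoc_castSucc, Fin.snoc_castSucc]
  · rw [prefix_snoc_last, Fin.snoc_last]

lemma transcript_sum_one : ∀ (T : ℕ) (x : ∀ t : Fin T, (Fin t.1 → A) → A → ℝ),
    (∀ t h, ∑ k, x t h k = 1) →
    ∑ a : Fin T → A, ∏ t, x t (transcriptPrefix a t) (a t) = 1 := by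
  intro T
  induction T with
  | zero =>
    intro x _
    rw [Fintype.sum_unique]
    simp
  | succ T ih =>
    intro x hx
    rw [transcript_sum_split]
    calc ∑ a' : Fin T → A, (∏ t : Fin T,
          x t.castSucc (transcriptPrefix a' t) (a' t)) * (∑ k, x (Fin.last T) a' k)
        = ∑ a' : Fin T → A, ∏ t : Fin T, x t.castSucc (transcriptPrefix a' t) (a' t) := by
          refine Finset.sum_congr rfl fun a' _ => ?_
          rw [hx, mul_one]
      _ = 1 := ih (fun t => x t.castSucc) (fun t h => hx t.castSucc h)

lemma transcript_sum_le : ∀ (T : ℕ) (G : ∀ t : Fin T, (Fin t.1 → A) → A → ℝ),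
    (∀ t h k, 0 ≤ G t h k) → ∀ (c : ℝ), 0 ≤ c → (∀ t h, ∑ k, G t h k ≤ c) →
    ∑ a : Fin T → A, ∏ t, G t (transcriptPrefix a t) (a t) ≤ c ^ T := by
  intro T
  induction T with
  | zero =>
    intro G _ c _ _
    rw [Fintype.sum_unique]
    simp
  | succ T ih =>
    intro G hG c hc hGc
    rw [transcript_sum_split]
    have hprod : ∀ a' : Fin T → A,
        0 ≤ ∏ t : Fin T, G t.castSucc (transcriptPrefix a' t) (a' t) := fun a' =>
      Finset.prod_nonneg fun t _ => hG t.castSucc _ _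
    calc ∑ a' : Fin T → A, (∏ t : Fin T,
          G t.castSucc (transcriptPrefix a' t) (a' t)) * (∑ k, G (Fin.last T) a' k)
        ≤ ∑ a' : Fin T → A, (∏ t : Fin T,
          G t.castSucc (transcriptPrefix a' t) (a' t)) * c := by
          refine Finset.sum_le_sum fun a' _ => ?_
          exact mul_le_mul_of_nonneg_left (hGc (Fin.last T) a') (hprod a')
      _ = (∑ a' : Fin T → A, ∏ t : Fin T,
          G t.castSucc (transcriptPrefix a' t) (a' t)) * c := (Finset.sum_mul _ _ _).symm
      _ ≤ c ^ T * c := by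
          refine mul_le_mul_of_nonneg_right ?_ hc
          exact ih (fun t => G t.castSucc) (fun t h k => hG t.castSucc h k) c hc
            (fun t h => hGc t.castSucc h)
      _ = c ^ (T + 1) := (pow_succ c T).symm

end Transcript

/-- In the experts setting with `T ≥ 2 ln|A|`, there exists an algorithm
for the Learner guaranteeing, against any adaptive Adversary, expected internal regret
`E[R^T_int] ≤ 4√(2T ln|A|)`, where
`R^T_int = max_{i,j∈A} Σ_{t : a^t = i} (r^t_i − r^t_j)`. -/
theorem internal_regret_bound
    (A : Type) [Fintype A] [Nonempty A] [DecidableEq A] (T : ℕ)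
    (hT : 2 * Real.log (Fintype.card A) ≤ T) :
    ∃ σ : ExpertStrategy A T,
      (∀ t h past, (∀ j, 0 ≤ σ t h past j) ∧ ∑ j, σ t h past j = 1) ∧
      ∀ r : ∀ t : Fin T, (Fin t.1 → A) → A → ℝ,
        (∀ t h j, r t h j ∈ Set.Icc (0 : ℝ) 1) →
        ∑ a : Fin T → A, transcriptProb (playOf σ r) a *
            (⨆ p : A × A, ∑ t, if a t = p.1 then
              r t (transcriptPrefix a t) p.1 - r t (transcriptPrefix a t) p.2 else 0) ≤
          4 * Real.sqrt (2 * T * Real.log (Fintype.card A)) := by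
  classical
  by_cases hA : Fintype.card A = 1
  · -- trivial case: a single action
    have hsub : Subsingleton A := Fintype.card_le_one_iff_subsingleton.mp hA.le
    refine ⟨fun _ _ _ _ => 1, fun t h past => ⟨fun j => zero_le_one, by simp [Finset.card_univ, hA]⟩, ?_⟩
    intro r hr
    have hzero : ∀ a : Fin T → A, (⨆ p : A × A, ∑ t, if a t = p.1 then
        r t (transcriptPrefix a t) p.1 - r t (transcriptPrefix a t) p.2 else 0) = 0 := by
      intro a
      have : ∀ p : A × A, (∑ t, if a t = p.1 then
          r t (transcriptPrefix a t) p.1 - r t (transcriptPrefix a t) p.2 else 0) = 0 := by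
        intro p
        have hp : p.2 = p.1 := Subsingleton.elim _ _
        exact Finset.sum_eq_zero fun t _ => by simp [hp]
      simp only [this]
      exact ciSup_const
    simp only [hzero, mul_zero, Finset.sum_const_zero]
    positivity
  · -- main case
    have hc1 : 1 ≤ Fintype.card A := Fintype.card_pos
    have hc2 : 2 ≤ Fintype.card A := by omega
    have hN1 : (1:ℝ) < (Fintype.card A : ℝ) := by exact_mod_cast hc2
    have hlog : 0 < Real.log (Fintype.card A) := Real.log_pos hN1
    have hT0 : (0:ℝ) < (T:ℝ) := lt_of_lt_of_le (by positivity) hT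
    set Lg := Real.log (Fintype.card A) with hLg
    set η := Real.sqrt (2 * Lg / T) with hη
    have hη0 : 0 < η := Real.sqrt_pos.mpr (by positivity)
    have hη2 : η ^ 2 = 2 * Lg / T := Real.sq_sqrt (by positivity)
    have hη1 : η ≤ 1 := by
      rw [hη]
      rw [show (1:ℝ) = Real.sqrt 1 from (Real.sqrt_one).symm]
      apply Real.sqrt_le_sqrt
      rw [div_le_one hT0]
      exact hT
    set σ : ExpertStrategy A T := fun t h past => xd A η t.1 past with hσdef
    have hσ : ∀ (t : Fin T) (h : Fin t.1 → A) (past : Fin t.1 → A → ℝ),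
        (∀ j, 0 ≤ σ t h past j) ∧ ∑ j, σ t h past j = 1 := by
      intro t h past
      show (∀ j, 0 ≤ xd A η t.1 past j) ∧ ∑ j, xd A η t.1 past j = 1
      rw [xd_eq]
      exact ⟨fun j => fixOf_nonneg _ j, fixOf_sum _⟩
    refine ⟨σ, hσ, ?_⟩
    intro r hr
    set X : ∀ t : Fin T, (Fin t.1 → A) → A → ℝ := playOf σ r with hX
    have hX0 : ∀ t h k, 0 ≤ X t h k := fun t h k => (hσ t h _).1 k
    have hX1 : ∀ t h, ∑ k, X t h k = 1 := fun t h => (hσ t h _).2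
    have hXle1 : ∀ t h k, X t h k ≤ 1 := by
      intro t h k
      calc X t h k ≤ ∑ j, X t h j :=
            Finset.single_le_sum (fun j _ => hX0 t h j) (Finset.mem_univ k)
        _ = 1 := hX1 t h
    -- the per-transcript loss sequence, play sequence, and gain sequence
    set L : (Fin T → A) → ℕ → A → ℝ := fun a n =>
      if h : n < T then r ⟨n, h⟩ (transcriptPrefix a ⟨n, h⟩) else 0 with hL
    set xa : (Fin T → A) → ℕ → A → ℝ := fun a n =>
      xd A η n (fun s => L a s.1) with hxa
    set g : (Fin T → A) → ℕ → A × A → ℝ := fun a n p =>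
      xa a n p.1 * (L a n p.1 - L a n p.2) with hg
    have hLmem : ∀ a n k, L a n k ∈ Set.Icc (0:ℝ) 1 := by
      intro a n k
      rw [hL]
      dsimp only
      split
      · next h => exact hr ⟨n, h⟩ _ k
      · exact ⟨le_refl 0, zero_le_one⟩
    -- consistency: along a transcript, the played distribution is xa
    have K1 : ∀ (a : Fin T → A) (t : Fin T), X t (transcriptPrefix a t) = xa a t.1 := by
      intro a t
      show xd A η t.1 (fun s => r ⟨s.1, s.2.trans t.2⟩ (historyPrefix (transcriptPrefix a t) s))
        = xd A η t.1 (fun s => L a s.1)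
      refine congrArg (xd A η t.1) ?_
      funext s
      show r ⟨s.1, s.2.trans t.2⟩ (historyPrefix (transcriptPrefix a t) s) = L a s.1
      have hLs : L a s.1 = r ⟨s.1, s.2.trans t.2⟩ (transcriptPrefix a ⟨s.1, s.2.trans t.2⟩) :=
        dif_pos (s.2.trans t.2)
      rw [hLs]
      rfl
    -- the algorithm's distribution is the stationary distribution of the EW weights
    have K2 : ∀ (a : Fin T → A) (n : ℕ), xa a n =
        fixOf (qOf (fun p : A × A => Real.exp (η * ∑ s ∈ Finset.range n, g a s p))) := by
      intro a n
      show xd A η n (fun s => L a s.1) = _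
      rw [xd_eq]
      refine congrArg fixOf (congrArg qOf ?_)
      funext p
      refine congrArg Real.exp (congrArg (fun z => η * z) ?_)
      exact Fin.sum_univ_eq_sum_range (fun m => g a m p) n
    have hxa01 : ∀ a n k, 0 ≤ xa a n k ∧ xa a n k ≤ 1 := by
      intro a n k
      rw [K2]
      exact ⟨fixOf_nonneg _ k, fixOf_le_one _ k⟩
    have K5 : ∀ a n p, |g a n p| ≤ 1 := by
      intro a n p
      have h1 := hxa01 a n p.1
      have h2 := hLmem a n p.1
      have h3 := hLmem a n p.2
      rw [hg]
      dsimp only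
      rw [abs_mul]
      calc |xa a n p.1| * |L a n p.1 - L a n p.2| ≤ 1 * 1 := by
            apply mul_le_mul _ _ (abs_nonneg _) zero_le_one
            · rw [abs_of_nonneg h1.1]; exact h1.2
            · rw [abs_le]
              constructor
              · have := h2.1; have := h3.2; simp only [Set.mem_Icc] at *; linarith [h2.1, h3.2]
              · simp only [Set.mem_Icc] at *; linarith [h2.2, h3.1]
        _ = 1 := one_mul 1
    have K4 : ∀ a, ∀ t < T, ∑ p : A × A,
        qOf (fun p' : A × A => Real.exp (η * ∑ s ∈ Finset.range t, g a s p')) p * g a t p = 0 := by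
      intro a t _
      have hwpos : ∀ p' : A × A, 0 < Real.exp (η * ∑ s ∈ Finset.range t, g a s p') :=
        fun p' => Real.exp_pos _
      have h0 := fixOf_zero (qOf_nonneg hwpos) (qOf_sum hwpos) (L a t)
      calc ∑ p : A × A, qOf (fun p' : A × A => Real.exp (η * ∑ s ∈ Finset.range t, g a s p')) p * g a t p
          = ∑ p : A × A, qOf (fun p' : A × A => Real.exp (η * ∑ s ∈ Finset.range t, g a s p')) p *
              (fixOf (qOf (fun p' : A × A => Real.exp (η * ∑ s ∈ Finset.range t, g a s p'))) p.1 *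
                (L a t p.1 - L a t p.2)) := by
            refine Finset.sum_congr rfl fun p _ => ?_
            have hgt : g a t p = fixOf (qOf (fun p' : A × A =>
                Real.exp (η * ∑ s ∈ Finset.range t, g a s p'))) p.1 * (L a t p.1 - L a t p.2) := by
              show xa a t p.1 * (L a t p.1 - L a t p.2) = _
              rw [congrFun (K2 a t) p.1]
            rw [hgt]
        _ = 0 := h0
    -- exponential weights bound, pathwise
    have hEW : ∀ a (p : A × A), ∑ t ∈ Finset.range T, g a t p ≤
        Real.log (Fintype.card (A × A)) / η + η * T :=
      fun a p => ew_bound η hη0 hη1 (g a) (fun n q => K5 a n q) T (K4 a) p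
    -- the martingale part
    set M : (Fin T → A) → A × A → ℝ := fun a p => ∑ t : Fin T,
      ((if a t = p.1 then (1:ℝ) else 0) - X t (transcriptPrefix a t) p.1) *
        (r t (transcriptPrefix a t) p.1 - r t (transcriptPrefix a t) p.2) with hM
    -- pathwise decomposition of the realized internal regret
    have hDEC : ∀ a (p : A × A), (∑ t : Fin T, if a t = p.1 then
        r t (transcriptPrefix a t) p.1 - r t (transcriptPrefix a t) p.2 else 0)
        = (∑ t ∈ Finset.range T, g a t p) + M a p := by
      intro a p
      rw [← Fin.sum_univ_eq_sum_range (fun m => g a m p) T, hM]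
      dsimp only
      rw [← Finset.sum_add_distrib]
      refine Finset.sum_congr rfl fun t _ => ?_
      have hLr : L a t.1 = r t (transcriptPrefix a t) := by
        show dite _ _ _ = _
        rw [dif_pos t.2]
      have hXxa : X t (transcriptPrefix a t) p.1 = xa a t.1 p.1 := congrFun (K1 a t) p.1
      rw [← hLr, hXxa, hg]
      dsimp only
      by_cases hat : a t = p.1 <;> simp [hat] <;> ring
    -- moment bound for each pair
    have hMGF : ∀ p : A × A, ∑ a : Fin T → A, transcriptProb X a * Real.exp (η * M a p)
        ≤ (1 + η ^ 2) ^ T := by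
      intro p
      set G : ∀ t : Fin T, (Fin t.1 → A) → A → ℝ := fun t h k =>
        X t h k * Real.exp (η * (((if k = p.1 then (1:ℝ) else 0) - X t h p.1) *
          (r t h p.1 - r t h p.2))) with hG
      have hG0 : ∀ t h k, 0 ≤ G t h k := fun t h k =>
        mul_nonneg (hX0 t h k) (Real.exp_pos _).le
      have hGsum : ∀ t h, ∑ k, G t h k ≤ 1 + η ^ 2 := by
        intro t h
        set c : ℝ := r t h p.1 - r t h p.2 with hc
        have hcmem1 := hr t h p.1
        have hcmem2 := hr t h p.2
        simp only [Set.mem_Icc] at hcmem1 hcmem2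
        have hcabs : |c| ≤ 1 := by rw [hc, abs_le]; constructor <;> linarith
        set d : A → ℝ := fun k => ((if k = p.1 then (1:ℝ) else 0) - X t h p.1) * c with hd
        have hdabs : ∀ k, |d k| ≤ 1 := by
          intro k
          rw [hd]
          dsimp only
          rw [abs_mul]
          calc |(if k = p.1 then (1:ℝ) else 0) - X t h p.1| * |c| ≤ 1 * 1 := by
                apply mul_le_mul _ hcabs (abs_nonneg _) zero_le_one
                rw [abs_le]
                have h1 := hX0 t h p.1
                have h2 := hXle1 t h p.1
                by_cases hk : k = p.1 <;> simp [hk] <;> constructor <;> linarith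
            _ = 1 := one_mul 1
        have hquad : ∀ k, Real.exp (η * d k) ≤ 1 + η * d k + η ^ 2 := by
          intro k
          have habs : |η * d k| ≤ 1 := by
            rw [abs_mul, abs_of_pos hη0]
            calc η * |d k| ≤ 1 * 1 := mul_le_mul hη1 (hdabs k) (abs_nonneg _) zero_le_one
              _ = 1 := one_mul 1
          have hd2 : d k ^ 2 ≤ 1 := by
            have := abs_le.1 (hdabs k); nlinarith
          calc Real.exp (η * d k) ≤ 1 + η * d k + (η * d k) ^ 2 := exp_le_quad habs
            _ ≤ 1 + η * d k + η ^ 2 := by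
                have : (η * d k) ^ 2 ≤ η ^ 2 := by rw [mul_pow]; nlinarith [sq_nonneg η]
                linarith
        have hxd0 : ∑ k, X t h k * d k = 0 := by
          rw [hd]
          dsimp only
          have : ∀ k, X t h k * (((if k = p.1 then (1:ℝ) else 0) - X t h p.1) * c)
              = (if k = p.1 then X t h k * c else 0) - X t h k * (X t h p.1 * c) := by
            intro k
            by_cases hk : k = p.1 <;> simp [hk] <;> ring
          rw [Finset.sum_congr rfl fun k _ => this k, Finset.sum_sub_distrib]
          rw [Finset.sum_ite_eq' Finset.univ p.1 (fun k => X t h k * c)]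
          rw [← Finset.sum_mul, hX1, one_mul]
          try simp
        calc ∑ k, G t h k ≤ ∑ k, X t h k * (1 + η * d k + η ^ 2) := by
              refine Finset.sum_le_sum fun k _ => ?_
              exact mul_le_mul_of_nonneg_left (hquad k) (hX0 t h k)
          _ = (∑ k, X t h k) * (1 + η ^ 2) + η * ∑ k, X t h k * d k := by
              rw [Finset.sum_mul, Finset.mul_sum, ← Finset.sum_add_distrib]
              exact Finset.sum_congr rfl fun k _ => by ring
          _ = 1 + η ^ 2 := by rw [hX1, hxd0, one_mul, mul_zero, add_zero]
      have hrw : ∀ a, transcriptProb X a * Real.exp (η * M a p)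
          = ∏ t, G t (transcriptPrefix a t) (a t) := by
        intro a
        rw [hM]
        dsimp only
        rw [Finset.mul_sum, Real.exp_sum, transcriptProb, ← Finset.prod_mul_distrib]
      calc ∑ a : Fin T → A, transcriptProb X a * Real.exp (η * M a p)
          = ∑ a : Fin T → A, ∏ t, G t (transcriptPrefix a t) (a t) :=
            Finset.sum_congr rfl fun a _ => hrw a
        _ ≤ (1 + η ^ 2) ^ T := transcript_sum_le T G hG0 (1 + η ^ 2) (by positivity) hGsum
    -- total probability is one
    have hprob1 : ∑ a : Fin T → A, transcriptProb X a = 1 :=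
      transcript_sum_one T X (fun t h => hX1 t h)
    have hprob0 : ∀ a, 0 ≤ transcriptProb X a := fun a =>
      Finset.prod_nonneg fun t _ => hX0 t _ (a t)
    set S : (Fin T → A) → ℝ := fun a => ∑ p : A × A, Real.exp (η * M a p) with hS
    have hSpos : ∀ a, 0 < S a := fun a =>
      Finset.sum_pos (fun p _ => Real.exp_pos _) Finset.univ_nonempty
    set B : ℝ := Real.log (Fintype.card (A × A)) / η + η * T with hB
    -- pathwise bound on the realized internal regret
    have hsup : ∀ a, (⨆ p : A × A, ∑ t, if a t = p.1 then
        r t (transcriptPrefix a t) p.1 - r t (transcriptPrefix a t) p.2 else 0)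
        ≤ B + Real.log (S a) / η := by
      intro a
      apply ciSup_le
      intro p
      rw [hDEC a p]
      refine add_le_add (hEW a p) ?_
      rw [le_div_iff₀ hη0]
      have h1 : Real.exp (η * M a p) ≤ S a :=
        Finset.single_le_sum (f := fun q => Real.exp (η * M a q))
          (fun q _ => (Real.exp_pos _).le) (Finset.mem_univ p)
      calc M a p * η = η * M a p := mul_comm _ _
        _ = Real.log (Real.exp (η * M a p)) := (Real.log_exp _).symm
        _ ≤ Real.log (S a) := Real.log_le_log (Real.exp_pos _) h1
    -- Jensen + moment bound
    have hjen : ∑ a : Fin T → A, transcriptProb X a * Real.log (S a)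
        ≤ Real.log (Fintype.card (A × A)) + T * η ^ 2 := by
      have hcc : ConcaveOn ℝ (Set.Ioi (0:ℝ)) Real.log := strictConcaveOn_log_Ioi.concaveOn
      have hj := hcc.le_map_sum (t := Finset.univ) (w := fun a => transcriptProb X a)
        (p := S) (fun a _ => hprob0 a) hprob1 (fun a _ => Set.mem_Ioi.mpr (hSpos a))
      simp only [smul_eq_mul] at hj
      have hswap : ∑ a : Fin T → A, transcriptProb X a * S a
          = ∑ p : A × A, ∑ a : Fin T → A, transcriptProb X a * Real.exp (η * M a p) := by
        rw [Finset.sum_comm]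
        exact Finset.sum_congr rfl fun a _ => by rw [hS]; exact Finset.mul_sum _ _ _
      have hub : ∑ a : Fin T → A, transcriptProb X a * S a
          ≤ (Fintype.card (A × A) : ℝ) * (1 + η ^ 2) ^ T := by
        rw [hswap]
        calc ∑ p : A × A, ∑ a : Fin T → A, transcriptProb X a * Real.exp (η * M a p)
            ≤ ∑ _p : A × A, (1 + η ^ 2) ^ T := Finset.sum_le_sum fun p _ => hMGF p
          _ = (Fintype.card (A × A) : ℝ) * (1 + η ^ 2) ^ T := by
              rw [Finset.sum_const, Finset.card_univ, nsmul_eq_mul]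
      have hpos : 0 < ∑ a : Fin T → A, transcriptProb X a * S a := by
        have hex : ∃ a, 0 < transcriptProb X a := by
          by_contra hcon
          push_neg at hcon
          have : (1:ℝ) ≤ 0 := hprob1 ▸ Finset.sum_nonpos fun a _ => hcon a
          linarith
        obtain ⟨a0, ha0⟩ := hex
        calc (0:ℝ) < transcriptProb X a0 * S a0 := mul_pos ha0 (hSpos a0)
          _ ≤ _ := Finset.single_le_sum
              (f := fun a => transcriptProb X a * S a)
              (fun a _ => mul_nonneg (hprob0 a) (hSpos a).le) (Finset.mem_univ a0)
      have hcard1 : (1:ℝ) ≤ (Fintype.card (A × A) : ℝ) := by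
        have : 1 ≤ Fintype.card (A × A) := Fintype.card_pos
        exact_mod_cast this
      calc ∑ a : Fin T → A, transcriptProb X a * Real.log (S a)
          ≤ Real.log (∑ a : Fin T → A, transcriptProb X a * S a) := hj
        _ ≤ Real.log ((Fintype.card (A × A) : ℝ) * (1 + η ^ 2) ^ T) :=
            Real.log_le_log hpos hub
        _ = Real.log (Fintype.card (A × A)) + T * Real.log (1 + η ^ 2) := by
            rw [Real.log_mul (by linarith) (by positivity), Real.log_pow]
        _ ≤ Real.log (Fintype.card (A × A)) + T * η ^ 2 := by
            have h1 : Real.log (1 + η ^ 2) ≤ η ^ 2 := by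
              have := Real.log_le_sub_one_of_pos (show (0:ℝ) < 1 + η ^ 2 by positivity)
              linarith
            have h2 : (0:ℝ) ≤ T := hT0.le
            nlinarith
    -- putting everything together
    have hlogP : Real.log (Fintype.card (A × A)) = 2 * Lg := by
      rw [Fintype.card_prod, Nat.cast_mul,
        Real.log_mul (by positivity) (by positivity), hLg]
      ring
    have h2Lg : 2 * Lg = η ^ 2 * T := by
      rw [hη2]
      field_simp
    have hfin : B + (Real.log (Fintype.card (A × A)) + T * η ^ 2) / η = 4 * (η * T) := by
      rw [hB, hlogP, h2Lg]
      field_simp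
      ring
    have hsqrt : η * T = Real.sqrt (2 * T * Lg) := by
      rw [hη, show (T:ℝ) = Real.sqrt ((T:ℝ) ^ 2) from (Real.sqrt_sq hT0.le).symm,
        ← Real.sqrt_mul (by positivity)]
      congr 1
      field_simp
      ring
      rw [Real.sq_sqrt (by positivity)]
    calc ∑ a : Fin T → A, transcriptProb (playOf σ r) a *
          (⨆ p : A × A, ∑ t, if a t = p.1 then
            r t (transcriptPrefix a t) p.1 - r t (transcriptPrefix a t) p.2 else 0)
        ≤ ∑ a : Fin T → A, transcriptProb X a * (B + Real.log (S a) / η) :=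
          Finset.sum_le_sum fun a _ => mul_le_mul_of_nonneg_left (hsup a) (hprob0 a)
      _ = (∑ a : Fin T → A, transcriptProb X a * B)
          + (∑ a : Fin T → A, transcriptProb X a * Real.log (S a)) / η := by
          rw [Finset.sum_div, ← Finset.sum_add_distrib]
          refine Finset.sum_congr rfl fun a _ => ?_
          rw [mul_add, mul_div_assoc]
      _ = B + (∑ a : Fin T → A, transcriptProb X a * Real.log (S a)) / η := by
          rw [← Finset.sum_mul, hprob1, one_mul]
      _ ≤ B + (Real.log (Fintype.card (A × A)) + T * η ^ 2) / η := by
          gcongr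
      _ = 4 * (η * T) := hfin
      _ = 4 * Real.sqrt (2 * T * Real.log (Fintype.card A)) := by
          rw [hsqrt, hLg]

end
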